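/- Let κ be a strictly concave real function on an interval I ⊂ ℝ, and let A ⊂ ℝ² be a set such that x + y, x + y', x' + y, x' + y' ∈ I and κ(x + y) + κ(x' + y') ≤ κ(x + y') + κ(x' + y) for all (x, y), (x', y') ∈ A (i.e. A is c-monotone for the cost c(x, y) = κ(x + y)). Then A is monotone: (x' − x)(y' − y) ≥ 0 for all (x, y), (x', y') ∈ A. -/

import Mathlib

open Real Set

lemma key_concave (I : Set ℝ) (κ : ℝ → ℝ) (hκ : StrictConcaveOn ℝ I κ)
    {a b d : ℝ} (ha : a ∈ I) (hd : d ∈ I) (hab : a < b) (hbd : b < d) :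
    κ a + κ d < κ b + κ (a + d - b) := by
  have had : a < d := hab.trans hbd
  set t : ℝ := (d - b) / (d - a) with ht
  have hda : (0:ℝ) < d - a := by linarith
  have h1 : 0 < t := div_pos (by linarith) hda
  have h2 : 0 < 1 - t := by
    have : t < 1 := (div_lt_one hda).2 (by linarith)
    linarith
  have hsum : t + (1 - t) = 1 := by ring
  have hb : t * a + (1 - t) * d = b := by
    rw [ht]
    field_simp
    ring
  have hc : (1 - t) * a + t * d = a + d - b := by
    rw [ht]
    field_simp
    ring
  have H1 := hκ.2 ha hd had.ne h1 h2 hsum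
  have H2 := hκ.2 ha hd had.ne h2 h1 (by ring)
  simp only [smul_eq_mul] at H1 H2
  rw [hb] at H1
  rw [hc] at H2
  nlinarith [H1, H2]

theorem stmt10 (I : Set ℝ) (κ : ℝ → ℝ) (hκ : StrictConcaveOn ℝ I κ)
    (A : Set (ℝ × ℝ))
    (hsumI : ∀ p ∈ A, ∀ q ∈ A,
      p.1 + p.2 ∈ I ∧ p.1 + q.2 ∈ I ∧ q.1 + p.2 ∈ I ∧ q.1 + q.2 ∈ I)
    (hcmono : ∀ p ∈ A, ∀ q ∈ A,
      κ (p.1 + p.2) + κ (q.1 + q.2) ≤ κ (p.1 + q.2) + κ (q.1 + p.2)) :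
    ∀ p ∈ A, ∀ q ∈ A, 0 ≤ (q.1 - p.1) * (q.2 - p.2) := by
  intro p hp q hq
  by_contra hlt
  push_neg at hlt
  obtain ⟨hI1, hI2, hI3, hI4⟩ := hsumI p hp q hq
  have hmono := hcmono p hp q hq
  rcases mul_neg_iff.1 hlt with ⟨h1, h2⟩ | ⟨h1, h2⟩
  · -- q.1 > p.1, q.2 < p.2 : a = p.1 + q.2, d = q.1 + p.2, b = p.1 + p.2
    have key := key_concave I κ hκ hI2 hI3
      (show p.1 + q.2 < p.1 + p.2 by linarith)
      (show p.1 + p.2 < q.1 + p.2 by linarith)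
    have : p.1 + q.2 + (q.1 + p.2) - (p.1 + p.2) = q.1 + q.2 := by ring
    rw [this] at key
    linarith
  · -- q.1 < p.1, q.2 > p.2 : a = q.1 + p.2, d = p.1 + q.2, b = p.1 + p.2
    have key := key_concave I κ hκ hI3 hI2
      (show q.1 + p.2 < p.1 + p.2 by linarith)
      (show p.1 + p.2 < p.1 + q.2 by linarith)
    have : q.1 + p.2 + (p.1 + q.2) - (p.1 + p.2) = q.1 + q.2 := by ring
    rw [this] at key
    linarith
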